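/- For each π ∈ S_{k+1} with k = a+b, the linear map Φ_π : M_n(ℂ) → M_n(ℂ)^{⊗k} whose Choi matrix is (θ_n^{⊗(a+1)} ⊗ id^{⊗b})(σ_{k+1}(π)) is (a,b)-unitarily equivariant. -/

import Mathlib

open Matrix

/-- `conj(U)^{⊗a} ⊗ U^{⊗b}` acting on `(ℂⁿ)^{⊗(a+b)}`. -/
noncomputable def conjKronPow (n a b : ℕ) (U : Matrix (Fin n) (Fin n) ℂ) :
    Matrix (Fin (a + b) → Fin n) (Fin (a + b) → Fin n) ℂ :=
  fun f g => ∏ i : Fin (a + b),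
    if (i : ℕ) < a then (starRingEnd ℂ) (U (f i) (g i)) else U (f i) (g i)

/-- The permutation representation `σ_{k+1}(π)` on `(ℂⁿ)^{⊗(k+1)}`. -/
def permMatrix (n k : ℕ) (π : Equiv.Perm (Fin (k + 1))) :
    Matrix (Fin (k + 1) → Fin n) (Fin (k + 1) → Fin n) ℂ :=
  fun f g => if (∀ i, f i = g (π⁻¹ i)) then 1 else 0

/-- The partial transpose `θ_n^{⊗(a+1)} ⊗ id^{⊗b}` on `(ℂⁿ)^{⊗(a+b+1)}`. -/
def partialTranspose (n a b : ℕ)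
    (C : Matrix (Fin (a + b + 1) → Fin n) (Fin (a + b + 1) → Fin n) ℂ) :
    Matrix (Fin (a + b + 1) → Fin n) (Fin (a + b + 1) → Fin n) ℂ :=
  fun f g => C (fun i => if (i : ℕ) < a + 1 then g i else f i)
               (fun i => if (i : ℕ) < a + 1 then f i else g i)

/-- The map `Φ_π : M_n(ℂ) → M_n(ℂ)^{⊗(a+b)}` whose Choi matrix is
`(θ_n^{⊗(a+1)} ⊗ id^{⊗b})(σ_{a+b+1}(π))`, recovered from its Choi matrix by
`Φ(X) = ∑_{i,j} X_{ij} Φ(e_{ij})`. -/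
noncomputable def permPhi (n a b : ℕ) (π : Equiv.Perm (Fin (a + b + 1)))
    (X : Matrix (Fin n) (Fin n) ℂ) :
    Matrix (Fin (a + b) → Fin n) (Fin (a + b) → Fin n) ℂ :=
  fun p q => ∑ i : Fin n, ∑ j : Fin n,
    X i j * partialTranspose n a b (permMatrix n (a + b) π) (Fin.cons i p) (Fin.cons j q)

namespace PermPhiAux

variable {n a b : ℕ}

/-- The big conjugation matrix `conj(U)^{⊗(a+1)} ⊗ U^{⊗b}` on `a+b+1` factors. -/
noncomputable def Vbig (n a b : ℕ) (U : Matrix (Fin n) (Fin n) ℂ)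
    (f h : Fin (a + b + 1) → Fin n) : ℂ :=
  ∏ m : Fin (a + b + 1),
    if (m : ℕ) < a + 1 then (starRingEnd ℂ) (U (f m) (h m)) else U (f m) (h m)

def mix (a b : ℕ) {n : ℕ} (x y : Fin (a + b + 1) → Fin n) : Fin (a + b + 1) → Fin n :=
  fun m => if (m : ℕ) < a + 1 then y m else x m

lemma mix_mix (x y : Fin (a + b + 1) → Fin n) :
    mix a b (mix a b x y) (mix a b y x) = x := by
  funext m; simp only [mix]; split_ifs <;> rfl

lemma pt_eq (π : Equiv.Perm (Fin (a + b + 1))) (x y : Fin (a + b + 1) → Fin n) :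
    partialTranspose n a b (permMatrix n (a + b) π) x y
      = permMatrix n (a + b) π (mix a b x y) (mix a b y x) := rfl

/-- involution used to reindex the double sum -/
def mixSwap (a b n : ℕ) :
    ((Fin (a + b + 1) → Fin n) × (Fin (a + b + 1) → Fin n))
      ≃ ((Fin (a + b + 1) → Fin n) × (Fin (a + b + 1) → Fin n)) where
  toFun z := (mix a b z.1 z.2, mix a b z.2 z.1)
  invFun z := (mix a b z.1 z.2, mix a b z.2 z.1)
  left_inv z := by simp [mix_mix]
  right_inv z := by simp [mix_mix]

/-- single-factor term after factorizing the β-sum -/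
noncomputable def Fac (U : Matrix (Fin n) (Fin n) ℂ) (π : Equiv.Perm (Fin (a + b + 1)))
    (f g : Fin (a + b + 1) → Fin n) (t : Fin (a + b + 1)) (x : Fin n) : ℂ :=
  (if (t : ℕ) < a + 1 then (starRingEnd ℂ) (U (f t) x) else (starRingEnd ℂ) (U (g t) x)) *
  (if ((π t : Fin (a + b + 1)) : ℕ) < a + 1 then U (g (π t)) x else U (f (π t)) x)

lemma factor_eq (U : Matrix (Fin n) (Fin n) ℂ) (π : Equiv.Perm (Fin (a + b + 1)))
    (f g β : Fin (a + b + 1) → Fin n) :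
    Vbig n a b U f (mix a b (fun m => β (π⁻¹ m)) β)
      * (starRingEnd ℂ) (Vbig n a b U g (mix a b β (fun m => β (π⁻¹ m))))
    = ∏ t : Fin (a + b + 1), Fac U π f g t (β t) := by
  have hP : Vbig n a b U f (mix a b (fun m => β (π⁻¹ m)) β)
      = (∏ m : Fin (a + b + 1),
          (if (m : ℕ) < a + 1 then (starRingEnd ℂ) (U (f m) (β m)) else 1))
        * ∏ m : Fin (a + b + 1),
          (if (m : ℕ) < a + 1 then 1 else U (f m) (β (π⁻¹ m))) := by
    rw [← Finset.prod_mul_distrib]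
    unfold Vbig
    apply Finset.prod_congr rfl
    intro m _
    by_cases h : (m : ℕ) < a + 1 <;> simp [mix, h]
  have hQ : (starRingEnd ℂ) (Vbig n a b U g (mix a b β (fun m => β (π⁻¹ m))))
      = (∏ m : Fin (a + b + 1),
          (if (m : ℕ) < a + 1 then U (g m) (β (π⁻¹ m)) else 1))
        * ∏ m : Fin (a + b + 1),
          (if (m : ℕ) < a + 1 then 1 else (starRingEnd ℂ) (U (g m) (β m))) := by
    rw [← Finset.prod_mul_distrib]
    unfold Vbig
    rw [map_prod]
    apply Finset.prod_congr rfl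
    intro m _
    by_cases h : (m : ℕ) < a + 1 <;> simp [mix, h]
  have e2 : (∏ m : Fin (a + b + 1), (if (m : ℕ) < a + 1 then (1 : ℂ) else U (f m) (β (π⁻¹ m))))
      = ∏ t : Fin (a + b + 1),
          (if ((π t : Fin (a + b + 1)) : ℕ) < a + 1 then (1 : ℂ) else U (f (π t)) (β t)) := by
    rw [← Equiv.prod_comp π
      (fun m => if (m : ℕ) < a + 1 then (1 : ℂ) else U (f m) (β (π⁻¹ m)))]
    exact Finset.prod_congr rfl fun t _ => by simp
  have e3 : (∏ m : Fin (a + b + 1), (if (m : ℕ) < a + 1 then U (g m) (β (π⁻¹ m)) else (1 : ℂ)))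
      = ∏ t : Fin (a + b + 1),
          (if ((π t : Fin (a + b + 1)) : ℕ) < a + 1 then U (g (π t)) (β t) else (1 : ℂ)) := by
    rw [← Equiv.prod_comp π
      (fun m => if (m : ℕ) < a + 1 then U (g m) (β (π⁻¹ m)) else (1 : ℂ))]
    exact Finset.prod_congr rfl fun t _ => by simp
  rw [hP, hQ, e2, e3, ← Finset.prod_mul_distrib, ← Finset.prod_mul_distrib,
    ← Finset.prod_mul_distrib]
  apply Finset.prod_congr rfl
  intro t _
  unfold Fac
  by_cases h1 : (t : ℕ) < a + 1 <;>
    by_cases h2 : ((π t : Fin (a + b + 1)) : ℕ) < a + 1 <;>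
    simp only [h1, h2, if_true, if_false] <;> ring

lemma fac_sum (U : Matrix (Fin n) (Fin n) ℂ) (hU : U ∈ Matrix.unitaryGroup (Fin n) ℂ)
    (π : Equiv.Perm (Fin (a + b + 1))) (f g : Fin (a + b + 1) → Fin n)
    (t : Fin (a + b + 1)) :
    ∑ x : Fin n, Fac U π f g t x
      = if mix a b f g (π t) = mix a b g f t then 1 else 0 := by
  have h1 : U * Uᴴ = 1 := by
    simpa [Matrix.star_eq_conjTranspose] using hU.2
  have hsum : ∀ y z : Fin n,
      (∑ x : Fin n, (starRingEnd ℂ) (U y x) * U z x) = if z = y then 1 else 0 := by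
    intro y z
    have h := congrArg (fun M => M z y) h1
    simp only [Matrix.mul_apply, Matrix.conjTranspose_apply, Matrix.one_apply] at h
    rw [← h]
    exact Finset.sum_congr rfl fun x _ => by rw [starRingEnd_apply]; ring
  by_cases ht : (t : ℕ) < a + 1 <;>
    by_cases hpt : ((π t : Fin (a + b + 1)) : ℕ) < a + 1 <;>
    simp only [Fac, mix, ht, hpt, if_true, if_false] <;> rw [hsum]

set_option maxHeartbeats 1000000 in
lemma key (π : Equiv.Perm (Fin (a + b + 1))) (U : Matrix (Fin n) (Fin n) ℂ)
    (hU : U ∈ Matrix.unitaryGroup (Fin n) ℂ) (f g : Fin (a + b + 1) → Fin n) :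
    ∑ h : Fin (a + b + 1) → Fin n, ∑ h' : Fin (a + b + 1) → Fin n,
      Vbig n a b U f h * partialTranspose n a b (permMatrix n (a + b) π) h h'
        * (starRingEnd ℂ) (Vbig n a b U g h')
    = partialTranspose n a b (permMatrix n (a + b) π) f g := by
  classical
  calc
    (∑ h : Fin (a + b + 1) → Fin n, ∑ h' : Fin (a + b + 1) → Fin n,
        Vbig n a b U f h * partialTranspose n a b (permMatrix n (a + b) π) h h'
          * (starRingEnd ℂ) (Vbig n a b U g h'))
      = ∑ z : (Fin (a + b + 1) → Fin n) × (Fin (a + b + 1) → Fin n),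
          Vbig n a b U f z.1 * partialTranspose n a b (permMatrix n (a + b) π) z.1 z.2
            * (starRingEnd ℂ) (Vbig n a b U g z.2) :=
        (Fintype.sum_prod_type (fun z : (Fin (a + b + 1) → Fin n) × (Fin (a + b + 1) → Fin n) =>
          Vbig n a b U f z.1 * partialTranspose n a b (permMatrix n (a + b) π) z.1 z.2
            * (starRingEnd ℂ) (Vbig n a b U g z.2))).symm
    _ = ∑ z : (Fin (a + b + 1) → Fin n) × (Fin (a + b + 1) → Fin n),
          Vbig n a b U f ((mixSwap a b n z).1)
            * partialTranspose n a b (permMatrix n (a + b) π) (mixSwap a b n z).1 (mixSwap a b n z).2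
            * (starRingEnd ℂ) (Vbig n a b U g ((mixSwap a b n z).2)) :=
        (Equiv.sum_comp (mixSwap a b n)
          (fun z : (Fin (a + b + 1) → Fin n) × (Fin (a + b + 1) → Fin n) =>
            Vbig n a b U f z.1 * partialTranspose n a b (permMatrix n (a + b) π) z.1 z.2
              * (starRingEnd ℂ) (Vbig n a b U g z.2))).symm
    _ = ∑ z : (Fin (a + b + 1) → Fin n) × (Fin (a + b + 1) → Fin n),
          Vbig n a b U f (mix a b z.1 z.2) * permMatrix n (a + b) π z.1 z.2
            * (starRingEnd ℂ) (Vbig n a b U g (mix a b z.2 z.1)) := by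
        apply Finset.sum_congr rfl
        intro z _
        have h : partialTranspose n a b (permMatrix n (a + b) π)
            (mix a b z.1 z.2) (mix a b z.2 z.1) = permMatrix n (a + b) π z.1 z.2 := by
          rw [pt_eq, mix_mix, mix_mix]
        rw [show (mixSwap a b n z).1 = mix a b z.1 z.2 from rfl,
          show (mixSwap a b n z).2 = mix a b z.2 z.1 from rfl, h]
    _ = ∑ α : Fin (a + b + 1) → Fin n, ∑ β : Fin (a + b + 1) → Fin n,
          Vbig n a b U f (mix a b α β) * permMatrix n (a + b) π α β
            * (starRingEnd ℂ) (Vbig n a b U g (mix a b β α)) :=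
        Fintype.sum_prod_type (fun z : (Fin (a + b + 1) → Fin n) × (Fin (a + b + 1) → Fin n) =>
          Vbig n a b U f (mix a b z.1 z.2) * permMatrix n (a + b) π z.1 z.2
            * (starRingEnd ℂ) (Vbig n a b U g (mix a b z.2 z.1)))
    _ = ∑ β : Fin (a + b + 1) → Fin n, ∑ α : Fin (a + b + 1) → Fin n,
          Vbig n a b U f (mix a b α β) * permMatrix n (a + b) π α β
            * (starRingEnd ℂ) (Vbig n a b U g (mix a b β α)) :=
        Finset.sum_comm
    _ = ∑ β : Fin (a + b + 1) → Fin n,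
          Vbig n a b U f (mix a b (fun m => β (π⁻¹ m)) β)
            * (starRingEnd ℂ) (Vbig n a b U g (mix a b β (fun m => β (π⁻¹ m)))) := by
        apply Finset.sum_congr rfl
        intro β _
        calc (∑ α : Fin (a + b + 1) → Fin n,
              Vbig n a b U f (mix a b α β) * permMatrix n (a + b) π α β
                * (starRingEnd ℂ) (Vbig n a b U g (mix a b β α)))
            = ∑ α : Fin (a + b + 1) → Fin n,
                if α = (fun m => β (π⁻¹ m)) then
                  Vbig n a b U f (mix a b α β)
                    * (starRingEnd ℂ) (Vbig n a b U g (mix a b β α)) else 0 := by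
              apply Finset.sum_congr rfl
              intro α _
              have hp : permMatrix n (a + b) π α β
                  = if α = (fun m => β (π⁻¹ m)) then 1 else 0 := by
                unfold permMatrix
                congr 1
                rw [eq_iff_iff]
                exact ⟨fun h => funext h, fun h m => congrFun h m⟩
              rw [hp]
              split_ifs <;> ring
          _ = _ := by rw [Finset.sum_ite_eq' Finset.univ]; simp
    _ = ∑ β : Fin (a + b + 1) → Fin n, ∏ t : Fin (a + b + 1), Fac U π f g t (β t) :=
        Finset.sum_congr rfl fun β _ => factor_eq U π f g β
    _ = ∏ t : Fin (a + b + 1), ∑ x : Fin n, Fac U π f g t x := by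
        rw [Finset.prod_univ_sum, Fintype.piFinset_univ]
    _ = ∏ t : Fin (a + b + 1), if mix a b f g (π t) = mix a b g f t then (1 : ℂ) else 0 :=
        Finset.prod_congr rfl fun t _ => fac_sum U hU π f g t
    _ = if ∀ t, mix a b f g (π t) = mix a b g f t then (1 : ℂ) else 0 := by
        rw [Finset.prod_boole]
        simp
    _ = partialTranspose n a b (permMatrix n (a + b) π) f g := by
        rw [pt_eq]
        unfold permMatrix
        congr 1
        rw [eq_iff_iff]
        constructor
        · intro h m
          have := h (π⁻¹ m)
          simpa using this
        · intro h t
          have := h (π t)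
          simpa using this

lemma Vbig_cons (U : Matrix (Fin n) (Fin n) ℂ) (i r : Fin n)
    (p p' : Fin (a + b) → Fin n) :
    Vbig n a b U (Fin.cons i p) (Fin.cons r p')
      = (starRingEnd ℂ) (U i r) * conjKronPow n a b U p p' := by
  unfold Vbig conjKronPow
  rw [Fin.prod_univ_succ]
  congr 1
  · apply Finset.prod_congr rfl
    intro t _
    have h : ((t.succ : Fin (a + b + 1)) : ℕ) < a + 1 ↔ (t : ℕ) < a := by
      simp [Fin.val_succ]
    simp only [Fin.cons_succ]
    by_cases ht : (t : ℕ) < a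
    · rw [if_pos (h.mpr ht), if_pos ht]
    · rw [if_neg (fun hc => ht (h.mp hc)), if_neg ht]

lemma sandwich (U : Matrix (Fin n) (Fin n) ℂ) (hU : U ∈ Matrix.unitaryGroup (Fin n) ℂ)
    (X : Matrix (Fin n) (Fin n) ℂ) (r s : Fin n) :
    ∑ i : Fin n, ∑ j : Fin n,
      (starRingEnd ℂ) (U i r) * (U * X * Uᴴ) i j * U j s = X r s := by
  have h1 : Uᴴ * U = 1 := by
    simpa [Matrix.star_eq_conjTranspose] using hU.1
  have h2 : Uᴴ * (U * X * Uᴴ) * U = X := by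
    calc Uᴴ * (U * X * Uᴴ) * U = (Uᴴ * U) * X * (Uᴴ * U) := by
          simp only [Matrix.mul_assoc]
      _ = X := by rw [h1]; simp
  calc ∑ i : Fin n, ∑ j : Fin n, (starRingEnd ℂ) (U i r) * (U * X * Uᴴ) i j * U j s
      = ∑ j : Fin n, ∑ i : Fin n, (Uᴴ r i * (U * X * Uᴴ) i j) * U j s := by
        rw [Finset.sum_comm]
        exact Finset.sum_congr rfl fun i _ => Finset.sum_congr rfl fun j _ => by
          rw [Matrix.conjTranspose_apply, starRingEnd_apply]
    _ = (Uᴴ * (U * X * Uᴴ) * U) r s := by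
        simp [Matrix.mul_apply, Finset.sum_mul]
    _ = X r s := by rw [h2]


lemma sum_rot3 {ι κ μ : Type*} [Fintype ι] [Fintype κ] [Fintype μ] (f : ι → κ → μ → ℂ) :
    ∑ x : ι, ∑ y : κ, ∑ z : μ, f x y z = ∑ y : κ, ∑ z : μ, ∑ x : ι, f x y z := by
  rw [Finset.sum_comm]
  exact Finset.sum_congr rfl fun _ _ => Finset.sum_comm

lemma sum_cons (F : (Fin (a + b + 1) → Fin n) → ℂ) :
    ∑ h : Fin (a + b + 1) → Fin n, F h
      = ∑ z : Fin n × (Fin (a + b) → Fin n), F (Fin.cons z.1 z.2) := by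
  rw [← Equiv.sum_comp (Fin.consEquiv fun _ => Fin n) F]
  exact Finset.sum_congr rfl fun z _ => rfl

set_option maxHeartbeats 1000000 in
lemma entry (U : Matrix (Fin n) (Fin n) ℂ) (hU : U ∈ Matrix.unitaryGroup (Fin n) ℂ)
    (π : Equiv.Perm (Fin (a + b + 1))) (i j : Fin n) (p q : Fin (a + b) → Fin n) :
    partialTranspose n a b (permMatrix n (a + b) π) (Fin.cons i p) (Fin.cons j q)
    = ∑ z : Fin n × (Fin (a + b) → Fin n), ∑ w : Fin n × (Fin (a + b) → Fin n),
        ((starRingEnd ℂ) (U i z.1) * U j w.1)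
          * (conjKronPow n a b U p z.2
              * partialTranspose n a b (permMatrix n (a + b) π) (Fin.cons z.1 z.2) (Fin.cons w.1 w.2)
              * (starRingEnd ℂ) (conjKronPow n a b U q w.2)) := by
  rw [← key π U hU (Fin.cons i p) (Fin.cons j q)]
  rw [sum_cons (fun h => ∑ h' : Fin (a + b + 1) → Fin n,
    Vbig n a b U (Fin.cons i p) h * partialTranspose n a b (permMatrix n (a + b) π) h h'
      * (starRingEnd ℂ) (Vbig n a b U (Fin.cons j q) h'))]
  apply Finset.sum_congr rfl
  intro z _
  rw [sum_cons (fun h' => Vbig n a b U (Fin.cons i p) (Fin.cons z.1 z.2) * partialTranspose n a b (permMatrix n (a + b) π) (Fin.cons z.1 z.2) h'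
      * (starRingEnd ℂ) (Vbig n a b U (Fin.cons j q) h'))]
  apply Finset.sum_congr rfl
  intro w _
  rw [Vbig_cons, Vbig_cons, _root_.map_mul]
  have hcc : (starRingEnd ℂ) ((starRingEnd ℂ) (U j w.1)) = U j w.1 := by simp
  rw [hcc]
  ring


lemma assemble {ι ζ : Type*} [Fintype ι] [Fintype ζ]
    (A Xm : ι → ι → ℂ) (c d : ι → ι → ℂ) (e1 : ζ → ι) (Wf : ζ → ζ → ℂ)
    (hsand : ∀ r s : ι, (∑ i : ι, ∑ j : ι, c i r * A i j * d j s) = Xm r s) :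
    (∑ i : ι, ∑ j : ι, A i j * ∑ z : ζ, ∑ w : ζ, (c i (e1 z) * d j (e1 w)) * Wf z w)
    = ∑ z : ζ, ∑ w : ζ, Xm (e1 z) (e1 w) * Wf z w := by
  calc (∑ i : ι, ∑ j : ι, A i j * ∑ z : ζ, ∑ w : ζ, (c i (e1 z) * d j (e1 w)) * Wf z w)
      = ∑ i : ι, ∑ j : ι, ∑ z : ζ, ∑ w : ζ,
          A i j * ((c i (e1 z) * d j (e1 w)) * Wf z w) := by
        refine Finset.sum_congr rfl fun i _ => Finset.sum_congr rfl fun j _ => ?_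
        rw [Finset.mul_sum]
        exact Finset.sum_congr rfl fun z _ => Finset.mul_sum _ _ _
    _ = ∑ j : ι, ∑ z : ζ, ∑ i : ι, ∑ w : ζ,
          A i j * ((c i (e1 z) * d j (e1 w)) * Wf z w) :=
        sum_rot3 (fun i j z => ∑ w : ζ, A i j * ((c i (e1 z) * d j (e1 w)) * Wf z w))
    _ = ∑ z : ζ, ∑ i : ι, ∑ j : ι, ∑ w : ζ,
          A i j * ((c i (e1 z) * d j (e1 w)) * Wf z w) :=
        sum_rot3 (fun j z i => ∑ w : ζ, A i j * ((c i (e1 z) * d j (e1 w)) * Wf z w))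
    _ = ∑ z : ζ, ∑ w : ζ, ∑ i : ι, ∑ j : ι,
          A i j * ((c i (e1 z) * d j (e1 w)) * Wf z w) :=
        Finset.sum_congr rfl fun z _ =>
          (sum_rot3 (fun i j w => A i j * ((c i (e1 z) * d j (e1 w)) * Wf z w))).trans
            (sum_rot3 (fun j w i => A i j * ((c i (e1 z) * d j (e1 w)) * Wf z w)))
    _ = ∑ z : ζ, ∑ w : ζ, Xm (e1 z) (e1 w) * Wf z w := by
        refine Finset.sum_congr rfl fun z _ => Finset.sum_congr rfl fun w _ => ?_
        rw [← hsand (e1 z) (e1 w), Finset.sum_mul]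
        refine Finset.sum_congr rfl fun i _ => ?_
        rw [Finset.sum_mul]
        exact Finset.sum_congr rfl fun j _ => by ring

end PermPhiAux

set_option maxHeartbeats 1000000 in
theorem permPhi_ab_unitarily_equivariant (n a b : ℕ) (hn : 1 ≤ n)
    (π : Equiv.Perm (Fin (a + b + 1)))
    (U : Matrix (Fin n) (Fin n) ℂ) (hU : U ∈ Matrix.unitaryGroup (Fin n) ℂ)
    (X : Matrix (Fin n) (Fin n) ℂ) :
    permPhi n a b π (U * X * Uᴴ) =
      conjKronPow n a b U * permPhi n a b π X * (conjKronPow n a b U)ᴴ := by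
  classical
  ext p q
  have hsand : ∀ r s : Fin n,
      (∑ i : Fin n, ∑ j : Fin n, (starRingEnd ℂ) (U i r) * (U * X * Uᴴ) i j * U j s)
        = X r s := PermPhiAux.sandwich U hU X
  have hmain := PermPhiAux.assemble (ζ := Fin n × (Fin (a + b) → Fin n)) (U * X * Uᴴ) X
    (fun i r => (starRingEnd ℂ) (U i r)) (fun j s => U j s) Prod.fst
    (fun z w => conjKronPow n a b U p z.2 * partialTranspose n a b (permMatrix n (a + b) π) (Fin.cons z.1 z.2) (Fin.cons w.1 w.2)
        * (starRingEnd ℂ) (conjKronPow n a b U q w.2)) hsand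
  beta_reduce at hmain
  have hL : permPhi n a b π (U * X * Uᴴ) p q
      = ∑ i : Fin n, ∑ j : Fin n, (U * X * Uᴴ) i j
          * ∑ z : Fin n × (Fin (a + b) → Fin n), ∑ w : Fin n × (Fin (a + b) → Fin n),
              ((starRingEnd ℂ) (U i z.1) * U j w.1)
                * (conjKronPow n a b U p z.2 * partialTranspose n a b (permMatrix n (a + b) π) (Fin.cons z.1 z.2) (Fin.cons w.1 w.2)
                    * (starRingEnd ℂ) (conjKronPow n a b U q w.2)) := by
    refine Finset.sum_congr rfl fun i _ => Finset.sum_congr rfl fun j _ => ?_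
    rw [PermPhiAux.entry U hU π i j p q]
  have hexp : (∑ z : Fin n × (Fin (a + b) → Fin n), ∑ w : Fin n × (Fin (a + b) → Fin n), X z.1 w.1
        * (conjKronPow n a b U p z.2 * partialTranspose n a b (permMatrix n (a + b) π) (Fin.cons z.1 z.2) (Fin.cons w.1 w.2)
            * (starRingEnd ℂ) (conjKronPow n a b U q w.2)))
      = ∑ r : Fin n, ∑ y : Fin (a + b) → Fin n, ∑ s : Fin n, ∑ x : Fin (a + b) → Fin n,
          X r s * (conjKronPow n a b U p y * partialTranspose n a b (permMatrix n (a + b) π) (Fin.cons r y) (Fin.cons s x)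
            * (starRingEnd ℂ) (conjKronPow n a b U q x)) := by
    calc (∑ z : Fin n × (Fin (a + b) → Fin n), ∑ w : Fin n × (Fin (a + b) → Fin n), X z.1 w.1
          * (conjKronPow n a b U p z.2 * partialTranspose n a b (permMatrix n (a + b) π) (Fin.cons z.1 z.2) (Fin.cons w.1 w.2)
              * (starRingEnd ℂ) (conjKronPow n a b U q w.2)))
        = ∑ r : Fin n, ∑ y : Fin (a + b) → Fin n, ∑ w : Fin n × (Fin (a + b) → Fin n), X r w.1
            * (conjKronPow n a b U p y * partialTranspose n a b (permMatrix n (a + b) π) (Fin.cons r y) (Fin.cons w.1 w.2)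
                * (starRingEnd ℂ) (conjKronPow n a b U q w.2)) :=
          Fintype.sum_prod_type (fun z : Fin n × (Fin (a + b) → Fin n) => ∑ w : Fin n × (Fin (a + b) → Fin n), X z.1 w.1
            * (conjKronPow n a b U p z.2 * partialTranspose n a b (permMatrix n (a + b) π) (Fin.cons z.1 z.2) (Fin.cons w.1 w.2)
                * (starRingEnd ℂ) (conjKronPow n a b U q w.2)))
      _ = ∑ r : Fin n, ∑ y : Fin (a + b) → Fin n, ∑ s : Fin n, ∑ x : Fin (a + b) → Fin n,
            X r s * (conjKronPow n a b U p y * partialTranspose n a b (permMatrix n (a + b) π) (Fin.cons r y) (Fin.cons s x)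
              * (starRingEnd ℂ) (conjKronPow n a b U q x)) :=
          Finset.sum_congr rfl fun r _ => Finset.sum_congr rfl fun y _ =>
            Fintype.sum_prod_type (fun w : Fin n × (Fin (a + b) → Fin n) => X r w.1
              * (conjKronPow n a b U p y * partialTranspose n a b (permMatrix n (a + b) π) (Fin.cons r y) (Fin.cons w.1 w.2)
                  * (starRingEnd ℂ) (conjKronPow n a b U q w.2)))
  have hR : (conjKronPow n a b U * permPhi n a b π X * (conjKronPow n a b U)ᴴ) p q
      = ∑ x : Fin (a + b) → Fin n, ∑ y : Fin (a + b) → Fin n, ∑ r : Fin n, ∑ s : Fin n,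
          X r s * (conjKronPow n a b U p y * partialTranspose n a b (permMatrix n (a + b) π) (Fin.cons r y) (Fin.cons s x)
            * (starRingEnd ℂ) (conjKronPow n a b U q x)) := by
    rw [Matrix.mul_apply]
    apply Finset.sum_congr rfl
    intro x _
    rw [Matrix.mul_apply, Matrix.conjTranspose_apply, ← starRingEnd_apply, Finset.sum_mul]
    apply Finset.sum_congr rfl
    intro y _
    have hphi : permPhi n a b π X y x
        = ∑ r : Fin n, ∑ s : Fin n, X r s * partialTranspose n a b (permMatrix n (a + b) π) (Fin.cons r y) (Fin.cons s x) := rfl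
    rw [hphi, Finset.mul_sum, Finset.sum_mul]
    apply Finset.sum_congr rfl
    intro r _
    rw [Finset.mul_sum, Finset.sum_mul]
    exact Finset.sum_congr rfl fun sv _ => by ring
  have hreord : (∑ x : Fin (a + b) → Fin n, ∑ y : Fin (a + b) → Fin n, ∑ r : Fin n, ∑ s : Fin n,
          X r s * (conjKronPow n a b U p y * partialTranspose n a b (permMatrix n (a + b) π) (Fin.cons r y) (Fin.cons s x)
            * (starRingEnd ℂ) (conjKronPow n a b U q x)))
      = ∑ r : Fin n, ∑ y : Fin (a + b) → Fin n, ∑ s : Fin n, ∑ x : Fin (a + b) → Fin n,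
          X r s * (conjKronPow n a b U p y * partialTranspose n a b (permMatrix n (a + b) π) (Fin.cons r y) (Fin.cons s x)
            * (starRingEnd ℂ) (conjKronPow n a b U q x)) := by
    calc (∑ x : Fin (a + b) → Fin n, ∑ y : Fin (a + b) → Fin n, ∑ r : Fin n, ∑ s : Fin n,
          X r s * (conjKronPow n a b U p y * partialTranspose n a b (permMatrix n (a + b) π) (Fin.cons r y) (Fin.cons s x)
            * (starRingEnd ℂ) (conjKronPow n a b U q x)))
        = ∑ y : Fin (a + b) → Fin n, ∑ r : Fin n, ∑ x : Fin (a + b) → Fin n, ∑ s : Fin n,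
            X r s * (conjKronPow n a b U p y * partialTranspose n a b (permMatrix n (a + b) π) (Fin.cons r y) (Fin.cons s x)
              * (starRingEnd ℂ) (conjKronPow n a b U q x)) :=
          PermPhiAux.sum_rot3 (fun x y r => ∑ s : Fin n,
            X r s * (conjKronPow n a b U p y * partialTranspose n a b (permMatrix n (a + b) π) (Fin.cons r y) (Fin.cons s x)
              * (starRingEnd ℂ) (conjKronPow n a b U q x)))
      _ = ∑ r : Fin n, ∑ x : Fin (a + b) → Fin n, ∑ y : Fin (a + b) → Fin n, ∑ s : Fin n,
            X r s * (conjKronPow n a b U p y * partialTranspose n a b (permMatrix n (a + b) π) (Fin.cons r y) (Fin.cons s x)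
              * (starRingEnd ℂ) (conjKronPow n a b U q x)) :=
          PermPhiAux.sum_rot3 (fun y r x => ∑ s : Fin n,
            X r s * (conjKronPow n a b U p y * partialTranspose n a b (permMatrix n (a + b) π) (Fin.cons r y) (Fin.cons s x)
              * (starRingEnd ℂ) (conjKronPow n a b U q x)))
      _ = ∑ r : Fin n, ∑ y : Fin (a + b) → Fin n, ∑ s : Fin n, ∑ x : Fin (a + b) → Fin n,
            X r s * (conjKronPow n a b U p y * partialTranspose n a b (permMatrix n (a + b) π) (Fin.cons r y) (Fin.cons s x)
              * (starRingEnd ℂ) (conjKronPow n a b U q x)) :=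
          Finset.sum_congr rfl fun r _ => PermPhiAux.sum_rot3 (fun x y s =>
            X r s * (conjKronPow n a b U p y * partialTranspose n a b (permMatrix n (a + b) π) (Fin.cons r y) (Fin.cons s x)
              * (starRingEnd ℂ) (conjKronPow n a b U q x)))
  rw [hL, hmain, hexp, hR, hreord]
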